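/- Let x₀ ∈ ℂⁿ and let Ψ be holomorphic on an open neighborhood of (x₀, conj x₀) in ℂⁿ × ℂⁿ such that the ℂ-bilinear form (ξ,η) ↦ D²Ψ(x₀, conj x₀)((ξ,0),(0,η)) is nondegenerate. Define φ(y, x̃; x, ỹ) := Ψ(x, ỹ) − Ψ(x, x̃) − Ψ(y, ỹ) + Ψ(y, x̃) for (x,ỹ), (x,x̃), (y,ỹ), (y,x̃) in the domain of Ψ. Then the second complex Fréchet derivative in the variables (x, ỹ) of φ, evaluated at y = x = x₀ and x̃ = ỹ = conj x₀, is a nondegenerate ℂ-bilinear form on ℂⁿ × ℂⁿ ≅ ℂ^{2n}. -/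

import Mathlib

set_option maxHeartbeats 1000000


open Complex

noncomputable section

/-- `ℂⁿ` with its Euclidean (Hermitian) norm. -/
abbrev En (n : ℕ) := EuclideanSpace ℂ (Fin n)

/-- Componentwise complex conjugation on `ℂⁿ`. -/
def conjV (n : ℕ) (x : En n) : En n :=
  (WithLp.equiv 2 (Fin n → ℂ)).symm fun j => (starRingEnd ℂ) (x j)

/-- The phase `φ(y, x̃; x, ỹ) = Ψ(x,ỹ) − Ψ(x,x̃) − Ψ(y,ỹ) + Ψ(y,x̃)`. -/
def phiF (n : ℕ) (Ψ : En n × En n → ℂ) (y xt x yt : En n) : ℂ :=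
  Ψ (x, yt) - Ψ (x, xt) - Ψ (y, yt) + Ψ (y, xt)

/-- if the mixed complex Hessian of `Ψ` at `(x₀, conj x₀)` is nondegenerate,
then the complex Hessian in the variables `(x, ỹ)` of the phase
`φ(y, x̃; x, ỹ) = Ψ(x,ỹ) − Ψ(x,x̃) − Ψ(y,ỹ) + Ψ(y,x̃)`, evaluated at
`y = x = x₀`, `x̃ = ỹ = conj x₀`, is a nondegenerate `ℂ`-bilinear form on `ℂ^{2n}`. -/
theorem statement9 (n : ℕ)
    (x₀ : En n) (U : Set (En n × En n)) (hU : IsOpen U) (hmem : (x₀, conjV n x₀) ∈ U)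
    (Ψ : En n × En n → ℂ) (hΨ : DifferentiableOn ℂ Ψ U)
    (hnd : ∀ ξ : En n,
      (∀ η : En n, fderiv ℂ (fderiv ℂ Ψ) (x₀, conjV n x₀) (ξ, 0) (0, η) = 0) → ξ = 0) :
    ∀ v : En n × En n,
      (∀ w : En n × En n,
        fderiv ℂ (fderiv ℂ (fun p : En n × En n => phiF n Ψ x₀ (conjV n x₀) p.1 p.2))
          (x₀, conjV n x₀) v w = 0) → v = 0 := by
  classical
  set xt := conjV n x₀ with hxt
  set p₀ : En n × En n := (x₀, xt) with hp₀
  -- If the second derivative of `Ψ` does not exist, `fderiv` is junk `0` and `hnd`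
  -- forces the space to be trivial.
  by_cases hD : DifferentiableAt ℂ (fderiv ℂ Ψ) p₀
  case neg =>
    have hz : fderiv ℂ (fderiv ℂ Ψ) p₀ = 0 := fderiv_zero_of_not_differentiableAt hD
    have htriv : ∀ ξ : En n, ξ = 0 := fun ξ => hnd ξ (by simp [hz])
    intro v _
    exact Prod.ext (htriv v.1) (htriv v.2)
  case pos =>
  set f := fderiv ℂ Ψ with hf
  set A := fderiv ℂ f p₀ with hAdef
  have hA : HasFDerivAt f A p₀ := hD.hasFDerivAt
  -- the projections
  set P₁ : En n × En n →L[ℂ] En n × En n :=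
    (ContinuousLinearMap.fst ℂ (En n) (En n)).prod 0 with hP₁
  set P₂ : En n × En n →L[ℂ] En n × En n :=
    (0 : En n × En n →L[ℂ] En n).prod (ContinuousLinearMap.snd ℂ (En n) (En n)) with hP₂
  have hP₁v : ∀ v : En n × En n, P₁ v = (v.1, 0) := fun v => rfl
  have hP₂v : ∀ v : En n × En n, P₂ v = (0, v.2) := fun v => rfl
  set L₁ : En n × En n → En n × En n := fun q => (q.1, xt) with hL₁
  set L₂ : En n × En n → En n × En n := fun q => (x₀, q.2) with hL₂
  have hL₁d : ∀ p, HasFDerivAt L₁ P₁ p := fun p =>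
    HasFDerivAt.prodMk hasFDerivAt_fst (hasFDerivAt_const xt p)
  have hL₂d : ∀ p, HasFDerivAt L₂ P₂ p := fun p =>
    HasFDerivAt.prodMk (hasFDerivAt_const x₀ p) (hasFDerivAt_snd)
  -- eventual differentiability of Ψ
  have hUnhds : U ∈ nhds p₀ := hU.mem_nhds hmem
  have hΨd : ∀ p ∈ U, HasFDerivAt Ψ (f p) p := fun p hp =>
    (hΨ.differentiableAt (hU.mem_nhds hp)).hasFDerivAt
  have hf_ev : ∀ᶠ y in nhds p₀, HasFDerivAt Ψ (f y) y :=
    Filter.eventually_of_mem hUnhds hΨd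
  -- symmetry of the second derivative
  have hsymm : ∀ v w, A v w = A w v := fun v w =>
    second_derivative_symmetric_of_eventually hf_ev hA v w
  -- the φ function and the eventual formula for its first derivative
  set φf : En n × En n → ℂ := fun p => phiF n Ψ x₀ xt p.1 p.2 with hφf
  set G : En n × En n → (En n × En n →L[ℂ] ℂ) := fun p =>
    f p - (f (L₁ p)).comp P₁ - (f (L₂ p)).comp P₂ with hG
  have hV : {p | p ∈ U ∧ L₁ p ∈ U ∧ L₂ p ∈ U} ∈ nhds p₀ := by
    have h1 : Continuous L₁ := (continuous_fst).prodMk continuous_const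
    have h2 : Continuous L₂ := (continuous_const).prodMk continuous_snd
    have hL₁p₀ : L₁ p₀ = p₀ := rfl
    have hL₂p₀ : L₂ p₀ = p₀ := rfl
    refine Filter.inter_mem hUnhds (Filter.inter_mem ?_ ?_)
    · exact h1.continuousAt.preimage_mem_nhds (by rw [hL₁p₀]; exact hUnhds)
    · exact h2.continuousAt.preimage_mem_nhds (by rw [hL₂p₀]; exact hUnhds)
  have hφ'for : ∀ p, p ∈ U → L₁ p ∈ U → L₂ p ∈ U →
      HasFDerivAt φf (G p) p := by
    intro p hp h1p h2p
    have h1 : HasFDerivAt (fun q : En n × En n => Ψ (q.1, q.2)) (f p) p := hΨd p hp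
    have h2 : HasFDerivAt (fun q : En n × En n => Ψ (q.1, xt))
        ((f (L₁ p)).comp P₁) p := (hΨd _ h1p).comp p (hL₁d p)
    have h3 : HasFDerivAt (fun q : En n × En n => Ψ (x₀, q.2))
        ((f (L₂ p)).comp P₂) p := (hΨd _ h2p).comp p (hL₂d p)
    have := ((h1.sub h2).sub h3).add_const (Ψ (x₀, xt))
    simpa [hφf, phiF, hG] using this
  have hφ'ev : fderiv ℂ φf =ᶠ[nhds p₀] G := by
    filter_upwards [hV] with p hp
    exact (hφ'for p hp.1 hp.2.1 hp.2.2).fderiv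
  -- the second derivative of φ
  have hGd : HasFDerivAt G
      (A - ((ContinuousLinearMap.compL ℂ (En n × En n) (En n × En n) ℂ).flip P₁).comp
          (A.comp P₁)
        - ((ContinuousLinearMap.compL ℂ (En n × En n) (En n × En n) ℂ).flip P₂).comp
          (A.comp P₂)) p₀ := by
    have hA1 : HasFDerivAt (fun p => f (L₁ p)) (A.comp P₁) p₀ := hA.comp p₀ (hL₁d p₀)
    have hA2 : HasFDerivAt (fun p => f (L₂ p)) (A.comp P₂) p₀ := hA.comp p₀ (hL₂d p₀)
    have hM1 : HasFDerivAt (fun p => (f (L₁ p)).comp P₁)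
        ((((ContinuousLinearMap.compL ℂ (En n × En n) (En n × En n) ℂ).flip P₁)).comp
          (A.comp P₁)) p₀ :=
      (((ContinuousLinearMap.compL ℂ (En n × En n) (En n × En n) ℂ).flip
        P₁).hasFDerivAt).comp p₀ hA1
    have hM2 : HasFDerivAt (fun p => (f (L₂ p)).comp P₂)
        ((((ContinuousLinearMap.compL ℂ (En n × En n) (En n × En n) ℂ).flip P₂)).comp
          (A.comp P₂)) p₀ :=
      (((ContinuousLinearMap.compL ℂ (En n × En n) (En n × En n) ℂ).flip
        P₂).hasFDerivAt).comp p₀ hA2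
    exact (hA.sub hM1).sub hM2
  have hkey : ∀ v w : En n × En n,
      fderiv ℂ (fderiv ℂ φf) p₀ v w
        = A v w - A (v.1, 0) (w.1, 0) - A (0, v.2) (0, w.2) := by
    intro v w
    have : fderiv ℂ (fderiv ℂ φf) p₀ = fderiv ℂ G p₀ := hφ'ev.fderiv_eq
    rw [this, hGd.fderiv]
    simp only [ContinuousLinearMap.sub_apply, ContinuousLinearMap.coe_comp',
      Function.comp_apply, ContinuousLinearMap.flip_apply,
      ContinuousLinearMap.compL_apply, hP₁v, hP₂v]
  -- expand bilinearly
  have hsplit : ∀ v : En n × En n, (v : En n × En n) = (v.1, (0 : En n)) + (0, v.2) := by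
    intro v; ext <;> simp
  have hbil : ∀ v w : En n × En n,
      A v w = A (v.1, 0) (w.1, 0) + A (v.1, 0) (0, w.2)
        + A (0, v.2) (w.1, 0) + A (0, v.2) (0, w.2) := by
    intro v w
    conv_lhs => rw [hsplit v, hsplit w]
    simp only [map_add, ContinuousLinearMap.add_apply]
    ring
  intro v hv
  have hD2 : ∀ w : En n × En n,
      A (v.1, 0) (0, w.2) + A (0, v.2) (w.1, 0) = 0 := by
    intro w
    have := hv w
    rw [hkey v w, hbil v w] at this
    linear_combination this
  -- first component
  have hv1 : v.1 = 0 := by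
    apply hnd
    intro η
    have := hD2 (0, η)
    simpa [Prod.mk_zero_zero] using this
  -- second component, via symmetry and finite-dimensional duality
  have hv2' : ∀ ξ : En n, A (ξ, 0) (0, v.2) = 0 := by
    intro ξ
    have := hD2 (ξ, 0)
    rw [← hsymm (0, v.2) (ξ, 0)]
    simpa [hv1, Prod.mk_zero_zero] using this
  -- the bilinear map T ξ η = A (ξ,0) (0,η)
  have hadd1 : ∀ a b : En n, ((a + b, (0:En n)) : En n × En n) = (a, 0) + (b, 0) := by
    intro a b; ext <;> simp
  have hsmul1 : ∀ (c : ℂ) (a : En n), ((c • a, (0:En n)) : En n × En n) = c • (a, 0) := by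
    intro c a; ext <;> simp
  have hadd2 : ∀ a b : En n, (((0:En n), a + b) : En n × En n) = (0, a) + (0, b) := by
    intro a b; ext <;> simp
  have hsmul2 : ∀ (c : ℂ) (a : En n), (((0:En n), c • a) : En n × En n) = c • (0, a) := by
    intro c a; ext <;> simp
  set T : En n →ₗ[ℂ] Module.Dual ℂ (En n) :=
    LinearMap.mk₂ ℂ (fun ξ η => A (ξ, 0) (0, η))
      (fun a b η => by
        show A (a + b, 0) (0, η) = A (a, 0) (0, η) + A (b, 0) (0, η)
        rw [hadd1 a b, map_add, ContinuousLinearMap.add_apply])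
      (fun c a η => by
        show A (c • a, 0) (0, η) = c • A (a, 0) (0, η)
        rw [hsmul1 c a, map_smul, ContinuousLinearMap.smul_apply, smul_eq_mul])
      (fun ξ a b => by
        show A (ξ, 0) (0, a + b) = A (ξ, 0) (0, a) + A (ξ, 0) (0, b)
        rw [hadd2 a b, map_add])
      (fun c ξ a => by
        show A (ξ, 0) (0, c • a) = c • A (ξ, 0) (0, a)
        rw [hsmul2 c a, map_smul, smul_eq_mul]) with hT
  have hTinj : Function.Injective T := by
    rw [← LinearMap.ker_eq_bot, LinearMap.ker_eq_bot']
    intro ξ hξ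
    apply hnd
    intro η
    have := LinearMap.congr_fun hξ η
    simpa [hT] using this
  have hTsurj : Function.Surjective T := by
    have hfr : Module.finrank ℂ (En n) = Module.finrank ℂ (Module.Dual ℂ (En n)) :=
      (Subspace.dual_finrank_eq).symm
    exact (LinearMap.injective_iff_surjective_of_finrank_eq_finrank hfr).mp hTinj
  have hv2 : v.2 = 0 := by
    rw [← Module.forall_dual_apply_eq_zero_iff ℂ v.2]
    intro g
    obtain ⟨ξ, rfl⟩ := hTsurj g
    simpa [hT] using hv2' ξ
  exact Prod.ext hv1 hv2

end
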